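/- Let 𝒢 = {(A_1, a_1), …, (A_K, a_K)} be a finite set of elements of SA(2,ℤ). If the subsemigroup ⟨A_1, …, A_K⟩ of SL(2,ℤ) is a group containing a torsion element, then the subsemigroup ⟨𝒢⟩ of SA(2,ℤ) is a group. -/

import Mathlib

open scoped Matrix

abbrev SL2Z := Matrix.SpecialLinearGroup (Fin 2) ℤ

/-- The special affine group `SA(2, ℤ) = ℤ² ⋊ SL(2, ℤ)`, as pairs `(A, a)`. -/
@[ext]
structure SA2 : Type where
  lin : SL2Z
  trans : Fin 2 → ℤ

namespace SA2

instance : Mul SA2 :=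
  ⟨fun p q => ⟨p.lin * q.lin, (p.lin : Matrix (Fin 2) (Fin 2) ℤ) *ᵥ q.trans + p.trans⟩⟩

instance : One SA2 := ⟨⟨1, 0⟩⟩

instance : Inv SA2 :=
  ⟨fun p => ⟨p.lin⁻¹, -(((p.lin⁻¹ : SL2Z) : Matrix (Fin 2) (Fin 2) ℤ) *ᵥ p.trans)⟩⟩

@[simp] lemma mul_lin (p q : SA2) : (p * q).lin = p.lin * q.lin := rfl
@[simp] lemma mul_trans (p q : SA2) :
    (p * q).trans = (p.lin : Matrix (Fin 2) (Fin 2) ℤ) *ᵥ q.trans + p.trans := rfl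
@[simp] lemma one_lin : (1 : SA2).lin = 1 := rfl
@[simp] lemma one_trans : (1 : SA2).trans = 0 := rfl
@[simp] lemma inv_lin (p : SA2) : (p⁻¹).lin = p.lin⁻¹ := rfl
@[simp] lemma inv_trans (p : SA2) :
    (p⁻¹).trans = -(((p.lin⁻¹ : SL2Z) : Matrix (Fin 2) (Fin 2) ℤ) *ᵥ p.trans) := rfl

instance : Group SA2 where
  mul_assoc a b c := by
    ext i
    · rw [mul_lin, mul_lin, mul_lin, mul_lin, mul_assoc]
    · simp only [mul_trans, mul_lin, Matrix.SpecialLinearGroup.coe_mul, Matrix.mulVec_add,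
        Matrix.mulVec_mulVec, add_assoc]
  one_mul a := by
    ext i
    · simp
    · simp
  mul_one a := by
    ext i
    · simp
    · simp [Matrix.mulVec_zero]
  inv_mul_cancel a := by
    ext i
    · simp
    · simp only [mul_trans, inv_lin, inv_trans, one_trans, add_neg_cancel]

end SA2

/-- A subsemigroup `S` of a group is a group if it contains the neutral element and
is closed under inverses. -/
def Subsemigroup.IsSubgroup {G : Type*} [Group G] (S : Subsemigroup G) : Prop :=
  (1 : G) ∈ S ∧ ∀ x ∈ S, x⁻¹ ∈ S


private lemma semi_pow_mem {M : Type*} [Monoid M] (S : Subsemigroup M) {x : M}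
    (hx : x ∈ S) : ∀ n : ℕ, 1 ≤ n → x ^ n ∈ S := by
  intro n hn
  induction n with
  | zero => omega
  | succ k ih =>
    rcases Nat.eq_zero_or_pos k with hk | hk
    · subst hk; simpa using hx
    · rw [pow_succ]; exact mul_mem (ih hk) hx

private lemma sq_aux (U : Matrix (Fin 2) (Fin 2) ℤ) (hdet : U.det = 1)
    (htr : U 0 0 + U 1 1 = 2) : U * U = (U + U) - 1 := by
  rw [Matrix.det_fin_two] at hdet
  ext i j
  fin_cases i <;> fin_cases j <;>
    simp [Matrix.mul_apply, Fin.sum_univ_two, Matrix.one_apply, Matrix.sub_apply,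
      Matrix.add_apply]
  · linear_combination U 0 0 * htr - hdet
  · linear_combination U 0 1 * htr
  · linear_combination U 1 0 * htr
  · linear_combination U 1 1 * htr - hdet

private lemma pow_aux (U : Matrix (Fin 2) (Fin 2) ℤ) (hsq : U * U = (U + U) - 1) :
    ∀ k : ℕ, U ^ (k + 1) = ((k : ℤ) + 1) • U - (k : ℤ) • 1 := by
  intro k
  induction k with
  | zero => simp
  | succ n ih =>
    rw [pow_succ, ih, sub_mul, smul_mul_assoc, smul_mul_assoc, one_mul, hsq]
    push_cast
    module

private lemma sa2_geom_sum_zero (U : Matrix (Fin 2) (Fin 2) ℤ) (hdet : U.det = 1)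
    (hne : U ≠ 1) (m : ℕ) (hm : 1 ≤ m) (hpow : U ^ m = 1) :
    ∑ k ∈ Finset.range m, U ^ k = 0 := by
  by_cases htr : U 0 0 + U 1 1 = 2
  · -- trace 2 case leads to U = 1, contradiction
    exfalso
    apply hne
    obtain ⟨k, rfl⟩ : ∃ k, m = k + 1 := ⟨m - 1, by omega⟩
    have h := pow_aux U (sq_aux U hdet htr) k
    rw [hpow, eq_sub_iff_add_eq'] at h
    have h' : ((k : ℤ) + 1) • U = ((k : ℤ) + 1) • (1 : Matrix (Fin 2) (Fin 2) ℤ) := by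
      rw [← h, add_smul, one_smul]; try abel
    have hk1 : ((k : ℤ) + 1) ≠ 0 := by positivity
    exact smul_right_injective _ hk1 h'
  · -- det (U - 1) ≠ 0 case
    have hd : (U - 1).det = 2 - (U 0 0 + U 1 1) := by
      rw [Matrix.det_fin_two] at hdet ⊢
      simp [Matrix.sub_apply, Matrix.one_apply]
      linear_combination hdet
    have hd0 : (U - 1).det ≠ 0 := by
      rw [hd]; intro h; apply htr; linarith
    have hgeo : (∑ k ∈ Finset.range m, U ^ k) * (U - 1) = 0 := by
      rw [geom_sum_mul, hpow, sub_self]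
    have h2 : (U - 1).det • (∑ k ∈ Finset.range m, U ^ k) = 0 := by
      calc (U - 1).det • (∑ k ∈ Finset.range m, U ^ k)
          = (∑ k ∈ Finset.range m, U ^ k) * ((U - 1) * (U - 1).adjugate) := by
            rw [Matrix.mul_adjugate, Matrix.mul_smul, mul_one]
        _ = 0 := by rw [← mul_assoc, hgeo, Matrix.zero_mul]
    exact (smul_eq_zero.mp h2).resolve_left hd0

private lemma sa2_pow_lin (p : SA2) : ∀ n : ℕ, (p ^ n).lin = p.lin ^ n := by
  intro n
  induction n with
  | zero => rw [pow_zero, pow_zero, SA2.one_lin]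
  | succ k ih => rw [pow_succ, pow_succ, SA2.mul_lin, ih]

private lemma sa2_pow_trans (p : SA2) : ∀ n : ℕ,
    (p ^ n).trans
      = (∑ j ∈ Finset.range n, ((p.lin : Matrix (Fin 2) (Fin 2) ℤ)) ^ j) *ᵥ p.trans := by
  intro n
  induction n with
  | zero => simp
  | succ k ih =>
    rw [pow_succ, SA2.mul_trans, ih, sa2_pow_lin, Matrix.SpecialLinearGroup.coe_pow,
      Finset.sum_range_succ, Matrix.add_mulVec, add_comm]

/-- If the subsemigroup `⟨A_1, …, A_K⟩` of `SL(2,ℤ)` is a group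
containing a torsion element, then the subsemigroup of `SA(2,ℤ)` generated by
`𝒢 = {(A_1,a_1), …, (A_K,a_K)}` is a group. -/
theorem sa2_closure_isGroup_of_torsion
    (K : ℕ) (hK : 0 < K) (A : Fin K → SL2Z) (a : Fin K → Fin 2 → ℤ)
    (hgrp : (Subsemigroup.closure (Set.range A)).IsSubgroup)
    (htor : ∃ T ∈ Subsemigroup.closure (Set.range A),
        T ≠ 1 ∧ ∃ m : ℕ, 1 ≤ m ∧ T ^ m = 1) :
    (Subsemigroup.closure (Set.range fun i => SA2.mk (A i) (a i))).IsSubgroup := by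
  classical
  obtain ⟨T, hTS, hT1, m, hm, hTm⟩ := htor
  set G := Subsemigroup.closure (Set.range fun i => SA2.mk (A i) (a i)) with hG
  -- every element of the SL₂(ℤ)-closure lifts to an element of G
  have lift : ∀ B ∈ Subsemigroup.closure (Set.range A), ∃ b, SA2.mk B b ∈ G := by
    intro B hB
    induction hB using Subsemigroup.closure_induction with
    | mem x hx =>
        obtain ⟨i, rfl⟩ := hx
        exact ⟨a i, Subsemigroup.subset_closure ⟨i, rfl⟩⟩
    | mul x y hx hy ihx ihy =>
        obtain ⟨b, hb⟩ := ihx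
        obtain ⟨c, hc⟩ := ihy
        exact ⟨(x : Matrix (Fin 2) (Fin 2) ℤ) *ᵥ c + b, mul_mem hb hc⟩
  -- the linear part of any element of G lies in the SL₂(ℤ)-closure
  have proj : ∀ p : SA2, p ∈ G → p.lin ∈ Subsemigroup.closure (Set.range A) := by
    intro p hp
    induction hp using Subsemigroup.closure_induction with
    | mem x hx =>
        obtain ⟨i, rfl⟩ := hx
        exact Subsemigroup.subset_closure ⟨i, rfl⟩
    | mul x y hx hy ihx ihy =>
        rw [SA2.mul_lin]; exact mul_mem ihx ihy
  -- the geometric sum of powers of T vanishes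
  have hUdet : ((T : Matrix (Fin 2) (Fin 2) ℤ)).det = 1 := T.2
  have hUne : (T : Matrix (Fin 2) (Fin 2) ℤ) ≠ 1 := by
    intro h
    exact hT1 (Subtype.coe_injective (by simpa using h))
  have hUpow : (T : Matrix (Fin 2) (Fin 2) ℤ) ^ m = 1 := by
    rw [← Matrix.SpecialLinearGroup.coe_pow, hTm]
    simp
  have hsum := sa2_geom_sum_zero _ hUdet hUne m hm hUpow
  -- any element of SA2 whose linear part is T has order dividing m
  have hpowT : ∀ p : SA2, p.lin = T → p ^ m = 1 := by
    intro p hp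
    have l1 : (p ^ m).lin = (1 : SA2).lin := by
      rw [sa2_pow_lin, hp, hTm, SA2.one_lin]
    have l2 : (p ^ m).trans = (1 : SA2).trans := by
      rw [sa2_pow_trans, hp, hsum, Matrix.zero_mulVec, SA2.one_trans]
    exact SA2.ext l1 l2
  obtain ⟨t, hgt⟩ := lift T hTS
  have hgm : (SA2.mk T t) ^ m = 1 := hpowT _ rfl
  have hone : (1 : SA2) ∈ G := hgm ▸ semi_pow_mem G hgt m hm
  have hm2 : 2 ≤ m := by
    rcases Nat.lt_or_ge m 2 with h | h
    · exfalso
      have hm1 : m = 1 := by omega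
      rw [hm1, pow_one] at hTm
      exact hT1 hTm
    · exact h
  refine ⟨hone, ?_⟩
  intro p hp
  have hlininv := hgrp.2 _ (proj p hp)
  obtain ⟨c, hc⟩ := lift _ hlininv
  set q : SA2 := SA2.mk p.lin⁻¹ c with hqdef
  have hu : q * p ∈ G := mul_mem hc hp
  have hug : ((q * p) * SA2.mk T t).lin = T := by
    rw [SA2.mul_lin, SA2.mul_lin]
    show p.lin⁻¹ * p.lin * T = T
    rw [inv_mul_cancel, one_mul]
  have h1 : ((q * p) * SA2.mk T t) ^ m = 1 := hpowT _ hug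
  have hinv : (q * p)⁻¹ = SA2.mk T t * ((q * p) * SA2.mk T t) ^ (m - 1) := by
    apply inv_eq_of_mul_eq_one_right
    calc (q * p) * (SA2.mk T t * ((q * p) * SA2.mk T t) ^ (m - 1))
        = ((q * p) * SA2.mk T t) * ((q * p) * SA2.mk T t) ^ (m - 1) := by
          rw [← mul_assoc]
      _ = ((q * p) * SA2.mk T t) ^ (m - 1 + 1) := by rw [pow_succ']
      _ = 1 := by rw [show m - 1 + 1 = m by omega, h1]
  have huinv : (q * p)⁻¹ ∈ G := by
    rw [hinv]
    exact mul_mem hgt (semi_pow_mem G (mul_mem hu hgt) (m - 1) (by omega))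
  have hfin : p⁻¹ = (q * p)⁻¹ * q := by group
  rw [hfin]
  exact mul_mem huinv hc
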